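/- Let a and b be integers with |a| > 1, |b| > 1 and gcd(a, b) = 1. Let x be the unique integer strictly between 0 and b (i.e., 1 ≤ x ≤ b − 1 if b > 1, and b + 1 ≤ x ≤ −1 if b < −1) such that a·x ≡ 1 (mod b), and let y be the unique integer strictly between 0 and a (i.e., 1 ≤ y ≤ a − 1 if a > 1, and a + 1 ≤ y ≤ −1 if a < −1) such that b·y ≡ 1 (mod a). Then a·x + b·y = 1 + a·b. -/
import Mathlib


set_option maxHeartbeats 1600000 in
theorem reciprocity_formula_main_case
    (a b x y : ℤ)
    (ha : 1 < |a|) (hb : 1 < |b|) (hab : Int.gcd a b = 1)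
    (hx_pos : 1 < b → 1 ≤ x ∧ x ≤ b - 1)
    (hx_neg : b < -1 → b + 1 ≤ x ∧ x ≤ -1)
    (hx : a * x ≡ 1 [ZMOD b])
    (hy_pos : 1 < a → 1 ≤ y ∧ y ≤ a - 1)
    (hy_neg : a < -1 → a + 1 ≤ y ∧ y ≤ -1)
    (hy : b * y ≡ 1 [ZMOD a]) :
    a * x + b * y = 1 + a * b := by
  have hcop : IsCoprime a b := Int.isCoprime_iff_gcd_eq_one.mpr hab
  have h1 : b ∣ (a * x + b * y - 1) := by
    have := (Int.ModEq.dvd hx)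
    have h2 : b ∣ a * x - 1 := by
      rcases this with ⟨c, hc⟩; exact ⟨-c, by linarith⟩
    rcases h2 with ⟨c, hc⟩; exact ⟨c + y, by ring_nf; linarith⟩
  have h2 : a ∣ (a * x + b * y - 1) := by
    have := (Int.ModEq.dvd hy)
    have h2 : a ∣ b * y - 1 := by
      rcases this with ⟨c, hc⟩; exact ⟨-c, by linarith⟩
    rcases h2 with ⟨c, hc⟩; exact ⟨c + x, by ring_nf; linarith⟩
  obtain ⟨k, hk⟩ := hcop.mul_dvd h2 h1
  have haa : 1 < a ∨ a < -1 := by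
    rcases lt_abs.mp ha with h | h
    · exact Or.inl h
    · exact Or.inr (by linarith)
  have hbb : 1 < b ∨ b < -1 := by
    rcases lt_abs.mp hb with h | h
    · exact Or.inl h
    · exact Or.inr (by linarith)
  rcases haa with ha1 | ha1 <;> rcases hbb with hb1 | hb1
  · obtain ⟨hx1, hx2⟩ := hx_pos hb1
    obtain ⟨hy1, hy2⟩ := hy_pos ha1
    have hab' : 0 < a * b := mul_pos (by linarith) (by linarith)
    have e1 : a ≤ a * x := by nlinarith
    have e2 : a * x ≤ a * b - a := by nlinarith
    have e3 : b ≤ b * y := by nlinarith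
    have e4 : b * y ≤ a * b - b := by nlinarith
    have hk1 : k = 1 := by
      rcases lt_trichotomy k 1 with h | h | h
      · have h' : 0 ≤ -k := by omega
        have := mul_nonneg hab'.le h'
        nlinarith
      · exact h
      · have h' : (2:ℤ) ≤ k := by omega
        have := mul_le_mul_of_nonneg_left h' hab'.le
        nlinarith
    rw [hk1] at hk; linarith
  · obtain ⟨hx1, hx2⟩ := hx_neg hb1
    obtain ⟨hy1, hy2⟩ := hy_pos ha1
    have hab' : a * b < 0 := mul_neg_of_pos_of_neg (by linarith) (by linarith)
    have e1 : a * b + a ≤ a * x := by nlinarith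
    have e2 : a * x ≤ -a := by nlinarith
    have e3 : a * b - b ≤ b * y := by nlinarith
    have e4 : b * y ≤ b := by nlinarith
    have hk1 : k = 1 := by
      rcases lt_trichotomy k 1 with h | h | h
      · have h' : 0 ≤ -k := by omega
        have := mul_nonneg (neg_nonneg.mpr hab'.le) h'
        nlinarith
      · exact h
      · have h' : (2:ℤ) ≤ k := by omega
        have := mul_le_mul_of_nonpos_left h' hab'.le
        nlinarith
    rw [hk1] at hk; linarith
  · obtain ⟨hx1, hx2⟩ := hx_pos hb1
    obtain ⟨hy1, hy2⟩ := hy_neg ha1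
    have hab' : a * b < 0 := mul_neg_of_neg_of_pos (by linarith) (by linarith)
    have e1 : a * b - a ≤ a * x := by
      have h := mul_le_mul_of_nonpos_left hx2 (show a ≤ 0 by linarith)
      linarith [mul_sub a b 1, mul_one a]
    have e2 : a * x ≤ a := by
      have h := mul_le_mul_of_nonpos_left hx1 (show a ≤ 0 by linarith)
      linarith [mul_one a]
    have e3 : a * b + b ≤ b * y := by
      have h := mul_le_mul_of_nonneg_left hy1 (show (0:ℤ) ≤ b by linarith)
      linarith [mul_add b a 1, mul_one b, mul_comm b a]
    have e4 : b * y ≤ -b := by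
      have h := mul_le_mul_of_nonneg_left hy2 (show (0:ℤ) ≤ b by linarith)
      linarith [mul_neg_one b]
    have hk1 : k = 1 := by
      rcases lt_trichotomy k 1 with h | h | h
      · have h' : 0 ≤ -k := by omega
        have hm := mul_nonneg (neg_nonneg.mpr hab'.le) h'
        have heq : (-(a*b))*(-k) = a*b*k := by ring
        linarith
      · exact h
      · have h' : (2:ℤ) ≤ k := by omega
        have hm := mul_le_mul_of_nonpos_left h' hab'.le
        have heq : (a*b)*2 = a*b + a*b := by ring
        linarith
    rw [hk1] at hk; linarith
  · obtain ⟨hx1, hx2⟩ := hx_neg hb1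
    obtain ⟨hy1, hy2⟩ := hy_neg ha1
    have hab' : 0 < a * b := mul_pos_of_neg_of_neg (by linarith) (by linarith)
    have e1 : -a ≤ a * x := by
      have h := mul_le_mul_of_nonpos_left hx2 (show a ≤ 0 by linarith)
      linarith [mul_neg_one a]
    have e2 : a * x ≤ a * b + a := by
      have h := mul_le_mul_of_nonpos_left hx1 (show a ≤ 0 by linarith)
      linarith [mul_add a b 1, mul_one a]
    have e3 : -b ≤ b * y := by
      have h := mul_le_mul_of_nonpos_left hy2 (show b ≤ 0 by linarith)
      linarith [mul_neg_one b]
    have e4 : b * y ≤ a * b + b := by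
      have h := mul_le_mul_of_nonpos_left hy1 (show b ≤ 0 by linarith)
      linarith [mul_add b a 1, mul_one b, mul_comm b a]
    have hk1 : k = 1 := by
      rcases lt_trichotomy k 1 with h | h | h
      · have h' : 0 ≤ -k := by omega
        have := mul_nonneg hab'.le h'
        nlinarith
      · exact h
      · have h' : (2:ℤ) ≤ k := by omega
        have := mul_le_mul_of_nonneg_left h' hab'.le
        nlinarith
    rw [hk1] at hk; linarith
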